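/- Consider the inexact estimate sequence: suppose A_k F(x^k) ≤ φ_k* + A_k ε for step k (induction hypothesis), φ_{k+1} is obtained from φ_k by adding α_{k+1}[f(y^{k+1}) + ⟨∇f(y^{k+1}), x − y^{k+1}⟩ + h(x)], and the inexact descent condition f(x^{k+1}) ≤ f(y^{k+1}) + ⟨∇f(y^{k+1}), x^{k+1} − y^{k+1}⟩ + (L_{k+1}/2)‖x^{k+1} − y^{k+1}‖² + (α_{k+1}/A_{k+1})ε holds with A_{k+1}/α_{k+1}² = L_{k+1}. Then A_{k+1}F(x^{k+1}) ≤ φ_{k+1}* + A_{k+1}ε. Consequently F(x^N) − F_* ≤ R²/A_N + ε. -/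

import Mathlib

open RealInnerProductSpace

/-- inexact estimate sequence for the adaptive similar-triangles method:
with estimate functions `φ_k` built from a 1-strongly-convex Bregman divergence `V(·,y⁰)`
plus linearizations, steps `y^{k+1} = (α_{k+1}u^k + A_k x^k)/A_{k+1}`,
`x^{k+1} = (α_{k+1}u^{k+1} + A_k x^k)/A_{k+1}`, `A_{k+1} = α_{k+1}² L_{k+1}`, and the
inexact descent condition
`f(x^{k+1}) ≤ f(y^{k+1}) + ⟪∇f(y^{k+1}), x^{k+1}-y^{k+1}⟫ + (L_{k+1}/2)‖x^{k+1}-y^{k+1}‖² + (α_{k+1}/A_{k+1})ε`,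
the inexact estimate-sequence bound propagates:
`A_k F(x^k) ≤ φ_k* + A_k ε` for all `k`; consequently `F(x^N) - F_* ≤ R²/A_N + ε`. -/
theorem stmt15 {E : Type*} [NormedAddCommGroup E] [InnerProductSpace ℝ E]
    (Q : Set E) (hQ : Convex ℝ Q) (f h : E → ℝ) (gf : E → E) (ε : ℝ) (hε : 0 < ε)
    (hfconv : ∀ y ∈ Q, ∀ w ∈ Q, f y + ⟪gf y, w - y⟫ ≤ f w)
    (hhconv : ConvexOn ℝ Q h)
    (V : E → ℝ) (hV0 : ∀ w, 0 ≤ V w)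
    (α A Lc : ℕ → ℝ) (hαpos : ∀ k, 0 < α k)
    (hA0 : A 0 = α 0) (hArec : ∀ k, A (k + 1) = A k + α (k + 1))
    (hAL : ∀ k, A k = (α k) ^ 2 * Lc k)
    (u x y : ℕ → E) (huQ : ∀ k, u k ∈ Q) (hxQ : ∀ k, x k ∈ Q) (hyQ : ∀ k, y k ∈ Q)
    (hVsc : ∀ w, (1 / 2) * ‖w - y 0‖ ^ 2 ≤ V w)
    (φ : ℕ → E → ℝ)
    (hφ0 : ∀ w, φ 0 w = V w + α 0 * (f (y 0) + ⟪gf (y 0), w - y 0⟫ + h w))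
    (hφrec : ∀ k w, φ (k + 1) w =
      φ k w + α (k + 1) * (f (y (k + 1)) + ⟪gf (y (k + 1)), w - y (k + 1)⟫ + h w))
    (humin : ∀ k, ∀ w ∈ Q, φ k (u k) ≤ φ k w)
    (hφsc : ∀ k, ∀ w ∈ Q, φ k (u k) + (1 / 2) * ‖w - u k‖ ^ 2 ≤ φ k w)
    (hx0 : x 0 = u 0)
    (hy : ∀ k, y (k + 1) = (A (k + 1))⁻¹ • (α (k + 1) • u k + A k • x k))
    (hx : ∀ k, x (k + 1) = (A (k + 1))⁻¹ • (α (k + 1) • u (k + 1) + A k • x k))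
    (hdesc0 : f (x 0) ≤ f (y 0) + ⟪gf (y 0), x 0 - y 0⟫ +
      Lc 0 / 2 * ‖x 0 - y 0‖ ^ 2 + (α 0 / A 0) * ε)
    (hdesc : ∀ k, f (x (k + 1)) ≤ f (y (k + 1)) +
      ⟪gf (y (k + 1)), x (k + 1) - y (k + 1)⟫ +
      Lc (k + 1) / 2 * ‖x (k + 1) - y (k + 1)‖ ^ 2 + (α (k + 1) / A (k + 1)) * ε)
    (xstar : E) (hxstar : xstar ∈ Q) (R2 : ℝ) (hR2 : R2 = V xstar)
    (hmin : ∀ w ∈ Q, f xstar + h xstar ≤ f w + h w) :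
    (∀ k, A k * (f (x k) + h (x k)) ≤ φ k (u k) + A k * ε) ∧
    (∀ N, (f (x N) + h (x N)) - (f xstar + h xstar) ≤ R2 / A N + ε) := by

  have hApos : ∀ k, 0 < A k := by
    intro k
    induction k with
    | zero => rw [hA0]; exact hαpos 0
    | succ n ih => rw [hArec n]; exact add_pos ih (hαpos (n + 1))
  have part1 : ∀ k, A k * (f (x k) + h (x k)) ≤ φ k (u k) + A k * ε := by
    intro k
    induction k with
    | zero =>
      have hα0 := hαpos 0
      have hL0 : α 0 * Lc 0 = 1 := by
        have hA := hAL 0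
        rw [hA0] at hA
        have h1 : α 0 * (α 0 * Lc 0) = α 0 * 1 := by rw [mul_one]; linear_combination -hA
        exact mul_left_cancel₀ (ne_of_gt hα0) h1
      have hd0 : f (u 0) ≤ f (y 0) + ⟪gf (y 0), u 0 - y 0⟫ +
          Lc 0 / 2 * ‖u 0 - y 0‖ ^ 2 + ε := by
        have hd := hdesc0
        rw [hx0, hA0, div_self (ne_of_gt hα0), one_mul] at hd
        exact hd
      have hd0m := mul_le_mul_of_nonneg_left hd0 hα0.le
      have hkey0 : α 0 * (Lc 0 / 2 * ‖u 0 - y 0‖ ^ 2) = 1 / 2 * ‖u 0 - y 0‖ ^ 2 := by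
        linear_combination (‖u 0 - y 0‖ ^ 2 / 2) * hL0
      have hVu := hVsc (u 0)
      rw [hφ0 (u 0), hx0, hA0]
      linarith
    | succ k ih =>
      have hA1pos := hApos (k + 1)
      have hAkpos := hApos k
      have hα1 := hαpos (k + 1)
      have hA1ne : A (k + 1) ≠ 0 := ne_of_gt hA1pos
      have hxs : A (k + 1) • x (k + 1) = α (k + 1) • u (k + 1) + A k • x k := by
        rw [hx k, smul_inv_smul₀ hA1ne]
      have hys : A (k + 1) • y (k + 1) = α (k + 1) • u k + A k • x k := by
        rw [hy k, smul_inv_smul₀ hA1ne]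
      have hvec : A (k + 1) • (x (k + 1) - y (k + 1)) = α (k + 1) • (u (k + 1) - u k) := by
        rw [smul_sub, hxs, hys, smul_sub]; abel
      have e0 : ‖A (k + 1) • (x (k + 1) - y (k + 1))‖ = ‖α (k + 1) • (u (k + 1) - u k)‖ := by
        rw [hvec]
      simp only [norm_smul, Real.norm_eq_abs, abs_of_pos hA1pos, abs_of_pos hα1] at e0
      have e1 : (A (k + 1) * ‖x (k + 1) - y (k + 1)‖) ^ 2 =
          (α (k + 1) * ‖u (k + 1) - u k‖) ^ 2 := by rw [e0]
      have hkey : A (k + 1) * (Lc (k + 1) / 2 * ‖x (k + 1) - y (k + 1)‖ ^ 2) =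
          1 / 2 * ‖u (k + 1) - u k‖ ^ 2 := by
        apply mul_left_cancel₀ hA1ne
        linear_combination (Lc (k + 1) / 2) * e1 - (‖u (k + 1) - u k‖ ^ 2 / 2) * (hAL (k + 1))
      have hips := congrArg (fun v => (inner ℝ (gf (y (k + 1))) v : ℝ)) hxs
      simp only [inner_add_right, real_inner_smul_right] at hips
      have hipy := congrArg (fun v => (inner ℝ (gf (y (k + 1))) v : ℝ)) hys
      simp only [inner_add_right, real_inner_smul_right] at hipy
      have hx' : (A k / A (k + 1)) • x k + (α (k + 1) / A (k + 1)) • u (k + 1) = x (k + 1) := by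
        rw [hx k, smul_add, div_eq_inv_mul, div_eq_inv_mul, mul_smul, mul_smul]
        exact add_comm _ _
      have hw := hhconv.2 (hxQ k) (huQ (k + 1))
        (div_nonneg hAkpos.le hA1pos.le) (div_nonneg hα1.le hA1pos.le)
        (by rw [← add_div, ← hArec k, div_self hA1ne])
      rw [hx'] at hw
      simp only [smul_eq_mul] at hw
      have hconvh : A (k + 1) * h (x (k + 1)) ≤ A k * h (x k) + α (k + 1) * h (u (k + 1)) := by
        have h2 := mul_le_mul_of_nonneg_left hw hA1pos.le
        have e : A (k + 1) * (A k / A (k + 1) * h (x k) + α (k + 1) / A (k + 1) * h (u (k + 1)))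
            = A k * h (x k) + α (k + 1) * h (u (k + 1)) := by
          field_simp
        linarith
      have hd := mul_le_mul_of_nonneg_left (hdesc k) hA1pos.le
      have hεe : A (k + 1) * (α (k + 1) / A (k + 1) * ε) = α (k + 1) * ε := by field_simp
      have hfm := mul_le_mul_of_nonneg_left (hfconv (y (k + 1)) (hyQ (k + 1)) (x k) (hxQ k))
        hAkpos.le
      have hφs := hφsc k (u (k + 1)) (huQ (k + 1))
      have ha1 : A (k + 1) * f (y (k + 1)) =
          A k * f (y (k + 1)) + α (k + 1) * f (y (k + 1)) := by rw [hArec k]; ring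
      have ha2 : A (k + 1) * ε = A k * ε + α (k + 1) * ε := by rw [hArec k]; ring
      have ha3 : A (k + 1) * ⟪gf (y (k + 1)), y (k + 1)⟫ =
          A k * ⟪gf (y (k + 1)), y (k + 1)⟫ + α (k + 1) * ⟪gf (y (k + 1)), y (k + 1)⟫ := by
        rw [hArec k]; ring
      rw [hφrec k (u (k + 1))]
      simp only [inner_sub_right] at hd hfm ⊢
      linarith
  refine ⟨part1, fun N => ?_⟩
  have hφstar : ∀ N, φ N xstar ≤ R2 + A N * (f xstar + h xstar) := by
    intro N
    induction N with
    | zero =>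
      rw [hφ0, hA0, hR2]
      have hf0 := hfconv (y 0) (hyQ 0) xstar hxstar
      have hm0 := mul_le_mul_of_nonneg_left
        (show f (y 0) + ⟪gf (y 0), xstar - y 0⟫ + h xstar ≤ f xstar + h xstar by linarith)
        (hαpos 0).le
      linarith
    | succ N ih =>
      rw [hφrec]
      have hfN := hfconv (y (N + 1)) (hyQ (N + 1)) xstar hxstar
      have hm1 := mul_le_mul_of_nonneg_left
        (show f (y (N + 1)) + ⟪gf (y (N + 1)), xstar - y (N + 1)⟫ + h xstar ≤
          f xstar + h xstar by linarith) (hαpos (N + 1)).le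
      have ha : A (N + 1) * (f xstar + h xstar) =
          A N * (f xstar + h xstar) + α (N + 1) * (f xstar + h xstar) := by rw [hArec N]; ring
      linarith
  have h1 := part1 N
  have h2 := humin N xstar hxstar
  have h3 := hφstar N
  have hAN := hApos N
  have key : A N * ((f (x N) + h (x N)) - (f xstar + h xstar)) ≤ A N * (R2 / A N + ε) := by
    have e : A N * (R2 / A N + ε) = R2 + A N * ε := by field_simp
    rw [e]
    nlinarith [h1, h2, h3]
  exact le_of_mul_le_mul_left key hAN
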